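/- Insertion into the heap flattening commutes with heap insertion: if t is a heap, then insert x (H2list t) = H2list (istH x t). -/

import Mathlib

open scoped List
variable {α : Type*}

def merge [LinearOrder α] : List α → List α → List α
  | [], l => l
  | l, [] => l
  | h1 :: t1, h2 :: t2 =>
    if h1 ≤ h2 then h1 :: merge t1 (h2 :: t2) else h2 :: merge (h1 :: t1) t2
termination_by l1 l2 => l1.length + l2.length

def insrt [LinearOrder α] (x : α) : List α → List α
  | [] => [x]
  | h :: t => if x ≤ h then x :: h :: t else h :: insrt x t

inductive BTree (α : Type*) where
  | Empty : BTree α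
  | Node : α → BTree α → BTree α → BTree α


inductive AllT (p : α → Prop) : BTree α → Prop
  | empty : AllT p BTree.Empty
  | node : ∀ {x l r}, p x → AllT p l → AllT p r → AllT p (BTree.Node x l r)

inductive BST [LinearOrder α] : BTree α → Prop
  | empty : BST BTree.Empty
  | node : ∀ {x : α} {l r}, AllT (· < x) l → AllT (x ≤ ·) r → BST l → BST r →
      BST (BTree.Node x l r)

inductive HEAP [LinearOrder α] : BTree α → Prop
  | empty : HEAP BTree.Empty
  | node : ∀ {x : α} {l r}, AllT (x ≤ ·) l → AllT (x ≤ ·) r → HEAP l → HEAP r →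
      HEAP (BTree.Node x l r)

def istBST [LinearOrder α] (x : α) : BTree α → BTree α
  | BTree.Empty => BTree.Node x BTree.Empty BTree.Empty
  | BTree.Node y l r => if x < y then BTree.Node y (istBST x l) r else BTree.Node y l (istBST x r)

def istH [LinearOrder α] (x : α) : BTree α → BTree α
  | BTree.Empty => BTree.Node x BTree.Empty BTree.Empty
  | BTree.Node y l r => if x < y then BTree.Node x (istH y r) l else BTree.Node y (istH x r) l

def BST2list : BTree α → List α
  | BTree.Empty => []
  | BTree.Node x l r => BST2list l ++ x :: BST2list r

def H2list [LinearOrder α] : BTree α → List α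
  | BTree.Empty => []
  | BTree.Node x l r => x :: merge (H2list l) (H2list r)

def BT2list [LinearOrder α] : BTree α → List α
  | BTree.Empty => []
  | BTree.Node x l r => merge [x] (merge (BT2list l) (BT2list r))

def buildBST [LinearOrder α] (l : List α) : BTree α :=
  l.foldl (fun t x => istBST x t) BTree.Empty

def isort [LinearOrder α] (l : List α) : List α :=
  l.foldr insrt []

theorem merge_perm [LinearOrder α] : ∀ l1 l2 : List α, merge l1 l2 ~ l1 ++ l2
  | [], l => by simp [merge]
  | h :: t, [] => by simp [merge]
  | h1 :: t1, h2 :: t2 => by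
    rw [merge]
    split
    · exact (merge_perm t1 (h2 :: t2)).cons h1
    · calc h2 :: merge (h1 :: t1) t2 ~ h2 :: (h1 :: t1 ++ t2) :=
            (merge_perm (h1 :: t1) t2).cons h2
        _ ~ (h1 :: t1) ++ h2 :: t2 := (List.perm_middle).symm
termination_by l1 l2 => l1.length + l2.length

theorem merge_sorted [LinearOrder α] : ∀ l1 l2 : List α,
    l1.Pairwise (· ≤ ·) → l2.Pairwise (· ≤ ·) → (merge l1 l2).Pairwise (· ≤ ·)
  | [], l, _, h2 => by simpa [merge] using h2
  | h :: t, [], h1, _ => by simpa [merge] using h1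
  | h1 :: t1, h2 :: t2, s1, s2 => by
    rw [merge]
    rw [List.pairwise_cons] at s1 s2
    split
    · rename_i hle
      rw [List.pairwise_cons]
      refine ⟨fun b hb => ?_, merge_sorted t1 (h2 :: t2) s1.2 (List.pairwise_cons.2 s2)⟩
      rcases (merge_perm t1 (h2 :: t2)).mem_iff.1 hb |> List.mem_append.1 with h | h
      · exact s1.1 b h
      · rcases List.mem_cons.1 h with h | h
        · exact h ▸ hle
        · exact hle.trans (s2.1 b h)
    · rename_i hle
      push_neg at hle
      rw [List.pairwise_cons]
      refine ⟨fun b hb => ?_, merge_sorted (h1 :: t1) t2 (List.pairwise_cons.2 s1) s2.2⟩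
      rcases (merge_perm (h1 :: t1) t2).mem_iff.1 hb |> List.mem_append.1 with h | h
      · rcases List.mem_cons.1 h with h | h
        · exact h ▸ hle.le
        · exact hle.le.trans (s1.1 b h)
      · exact s2.1 b h
termination_by l1 l2 => l1.length + l2.length

theorem insrt_perm [LinearOrder α] (x : α) : ∀ l : List α, insrt x l ~ x :: l
  | [] => by simp [insrt]
  | h :: t => by
    rw [insrt]
    split
    · rfl
    · exact ((insrt_perm x t).cons h).trans (List.Perm.swap x h t)

theorem insrt_sorted [LinearOrder α] (x : α) : ∀ l : List α,
    l.Pairwise (· ≤ ·) → (insrt x l).Pairwise (· ≤ ·)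
  | [], _ => by simp [insrt]
  | h :: t, s => by
    rw [insrt]
    rw [List.pairwise_cons] at s
    split
    · rename_i hle
      exact List.pairwise_cons.2 ⟨fun b hb => by
        rcases List.mem_cons.1 hb with hb | hb
        · exact hb ▸ hle
        · exact hle.trans (s.1 b hb), List.pairwise_cons.2 s⟩
    · rename_i hle
      push_neg at hle
      refine List.pairwise_cons.2 ⟨fun b hb => ?_, insrt_sorted x t s.2⟩
      rcases (insrt_perm x t).mem_iff.1 hb |> List.mem_cons.1 with hb | hb
      · exact hb ▸ hle.le
      · exact s.1 b hb

theorem mem_H2list [LinearOrder α] {p : α → Prop} : ∀ {t : BTree α}, AllT p t →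
    ∀ b ∈ H2list t, p b
  | BTree.Empty, _, b, hb => by simp [H2list] at hb
  | BTree.Node y l r, h, b, hb => by
    rcases h with ⟨hy, hl, hr⟩
    rw [H2list] at hb
    rcases List.mem_cons.1 hb with hb | hb
    · exact hb ▸ ‹p y›
    · rcases (merge_perm _ _).mem_iff.1 hb |> List.mem_append.1 with h | h
      · exact mem_H2list ‹AllT p l› b h
      · exact mem_H2list ‹AllT p r› b h

theorem H2list_sorted [LinearOrder α] : ∀ {t : BTree α}, HEAP t →
    (H2list t).Pairwise (· ≤ ·)
  | BTree.Empty, _ => by simp [H2list]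
  | BTree.Node y l r, h => by
    rcases h with ⟨hyl, hyr, hl, hr⟩
    rw [H2list, List.pairwise_cons]
    refine ⟨fun b hb => ?_, merge_sorted _ _ (H2list_sorted ‹HEAP l›) (H2list_sorted ‹HEAP r›)⟩
    rcases (merge_perm _ _).mem_iff.1 hb |> List.mem_append.1 with h | h
    · exact mem_H2list ‹AllT (y ≤ ·) l› b h
    · exact mem_H2list ‹AllT (y ≤ ·) r› b h

theorem AllT_imp {p q : α → Prop} (hpq : ∀ a, p a → q a) :
    ∀ {t : BTree α}, AllT p t → AllT q t
  | BTree.Empty, _ => AllT.empty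
  | BTree.Node y l r, h => by
    rcases h with ⟨hy, hl, hr⟩
    exact AllT.node (hpq y ‹p y›) (AllT_imp hpq ‹AllT p l›) (AllT_imp hpq ‹AllT p r›)

theorem AllT_istH [LinearOrder α] {p : α → Prop} :
    ∀ (x : α) (t : BTree α), AllT p t → p x → AllT p (istH x t)
  | x, BTree.Empty, _, hx => AllT.node hx AllT.empty AllT.empty
  | x, BTree.Node y l r, h, hx => by
    rcases h with ⟨hy, hl, hr⟩
    rw [istH]
    split
    · exact AllT.node hx (AllT_istH y r ‹AllT p r› ‹p y›) ‹AllT p l›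
    · exact AllT.node ‹p y› (AllT_istH x r ‹AllT p r› hx) ‹AllT p l›

theorem HEAP_istH [LinearOrder α] : ∀ (x : α) (t : BTree α), HEAP t → HEAP (istH x t)
  | x, BTree.Empty, _ => HEAP.node AllT.empty AllT.empty HEAP.empty HEAP.empty
  | x, BTree.Node y l r, h => by
    rcases h with ⟨hyl, hyr, hl, hr⟩
    rw [istH]
    split
    · rename_i hxy
      exact HEAP.node
        (AllT_istH y r (AllT_imp (fun a h => hxy.le.trans h) ‹AllT (y ≤ ·) r›) hxy.le)
        (AllT_imp (fun a h => hxy.le.trans h) ‹AllT (y ≤ ·) l›)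
        (HEAP_istH y r ‹HEAP r›) ‹HEAP l›
    · rename_i hxy
      push_neg at hxy
      exact HEAP.node (AllT_istH x r ‹AllT (y ≤ ·) r› hxy) ‹AllT (y ≤ ·) l›
        (HEAP_istH x r ‹HEAP r›) ‹HEAP l›

theorem istH_perm [LinearOrder α] : ∀ (x : α) (t : BTree α),
    H2list (istH x t) ~ x :: H2list t
  | x, BTree.Empty => by simp [istH, H2list, merge]
  | x, BTree.Node y l r => by
    rw [istH]
    split
    · rw [H2list, H2list]
      refine List.Perm.cons x ?_
      calc merge (H2list (istH y r)) (H2list l)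
          ~ H2list (istH y r) ++ H2list l := merge_perm _ _
        _ ~ (y :: H2list r) ++ H2list l := (istH_perm y r).append_right _
        _ ~ y :: (H2list l ++ H2list r) :=
            (List.perm_append_comm).cons y
        _ ~ y :: merge (H2list l) (H2list r) := ((merge_perm _ _).symm).cons y
    · rw [H2list, H2list]
      calc y :: merge (H2list (istH x r)) (H2list l)
          ~ y :: (H2list (istH x r) ++ H2list l) := (merge_perm _ _).cons y
        _ ~ y :: ((x :: H2list r) ++ H2list l) :=
            ((istH_perm x r).append_right _).cons y
        _ ~ x :: y :: (H2list l ++ H2list r) := by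
            refine ((List.perm_append_comm).cons x).cons y |>.trans (List.Perm.swap x y _)
        _ ~ x :: y :: merge (H2list l) (H2list r) :=
            (((merge_perm _ _).symm).cons y).cons x

theorem insert_H2list_comm [LinearOrder α] (x : α) (t : BTree α) (h : HEAP t) :
    insrt x (H2list t) = H2list (istH x t) := by
  exact List.Perm.eq_of_pairwise'
    (insrt_sorted x _ (H2list_sorted h)) (H2list_sorted (HEAP_istH x t h))
    ((insrt_perm x _).trans (istH_perm x t).symm)
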